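/- Let π be a Baxter permutation of [n]. For any 1 ≤ i ≤ n−1, the node labeled i+1 in MinC(π) is a left child of its parent if and only if the node labeled i in MaxC(π) is a right child of its parent. Equivalently, with lr and lr' the left/right-child indicator sequences of the increasing traversal of MinC(π) and the decreasing traversal of MaxC(π) respectively, lr'[i] = l iff lr[n−i] = r. -/

import Mathlib

/-- `π` is a permutation of `[n] = {1,…,n}`. -/
def IsPermOn (n : ℕ) (π : ℕ → ℕ) : Prop :=
  Set.BijOn π (Set.Icc 1 n) (Set.Icc 1 n)

/-- `π` (a map on `{1,…,n}`) is a Baxter permutation: it avoids the vincular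
patterns 2-41-3 and 3-14-2. -/
def IsBaxter (n : ℕ) (π : ℕ → ℕ) : Prop :=
  ∀ i j k : ℕ, 1 ≤ i → i < j → j < k → k ≤ n →
    ¬(π (j + 1) < π i ∧ π i < π k ∧ π k < π j) ∧
    ¬(π j < π k ∧ π k < π i ∧ π i < π (j + 1))

/-- `π` (a map on `{1,…,n}`) is a separable permutation: it avoids the classical
patterns 2413 and 3142. -/
def IsSeparablePerm (n : ℕ) (π : ℕ → ℕ) : Prop :=
  ∀ i1 i2 i3 i4 : ℕ, 1 ≤ i1 → i1 < i2 → i2 < i3 → i3 < i4 → i4 ≤ n →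
    ¬(π i3 < π i1 ∧ π i1 < π i4 ∧ π i4 < π i2) ∧
    ¬(π i2 < π i4 ∧ π i4 < π i1 ∧ π i1 < π i3)

/-- Binary trees with natural-number labels at internal nodes. -/
inductive BTree where
  | leaf : BTree
  | node : BTree → ℕ → BTree → BTree

/-- Membership of a label in a binary tree. -/
def BTree.mem : BTree → ℕ → Prop
  | .leaf, _ => False
  | .node l x r, v => v = x ∨ l.mem v ∨ r.mem v

/-- Inorder traversal of a binary tree. -/
def BTree.inorder : BTree → List ℕ
  | .leaf => []
  | .node l x r => l.inorder ++ x :: r.inorder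

/-- The label at the root, if any. -/
def BTree.rootLabel : BTree → Option ℕ
  | .leaf => none
  | .node _ x _ => some x

/-- `IsMinC S t` holds iff `t` is the minimum Cartesian tree of the sequence `S`:
the root carries the minimum of `S` and the subtrees are the minimum Cartesian
trees of the prefix and suffix around it. -/
inductive IsMinC : List ℕ → BTree → Prop where
  | leaf : IsMinC [] .leaf
  | node : ∀ (l r : List ℕ) (x : ℕ) (tl tr : BTree),
      (∀ y ∈ l, x < y) → (∀ y ∈ r, x < y) →
      IsMinC l tl → IsMinC r tr → IsMinC (l ++ x :: r) (.node tl x tr)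

/-- The sequence `(π(1), …, π(n))` as a list. -/
def permList (n : ℕ) (π : ℕ → ℕ) : List ℕ :=
  (List.range n).map (fun k => π (k + 1))

/-- In `t`, the node labeled `c` is the left child of the node labeled `p`. -/
def leftChildRel : BTree → ℕ → ℕ → Prop
  | .leaf, _, _ => False
  | .node l x r, p, c =>
      (x = p ∧ l.rootLabel = some c) ∨ leftChildRel l p c ∨ leftChildRel r p c

/-- In `t`, the node labeled `c` is the right child of the node labeled `p`. -/
def rightChildRel : BTree → ℕ → ℕ → Prop
  | .leaf, _, _ => False
  | .node l x r, p, c =>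
      (x = p ∧ r.rootLabel = some c) ∨ rightChildRel l p c ∨ rightChildRel r p c

/-- IsMaxC S t holds iff t is the maximum Cartesian tree of the sequence S. -/
inductive IsMaxC : List ℕ → BTree → Prop where
  | leaf : IsMaxC [] .leaf
  | node : ∀ (l r : List ℕ) (x : ℕ) (tl tr : BTree),
      (∀ y ∈ l, y < x) → (∀ y ∈ r, y < x) →
      IsMaxC l tl → IsMaxC r tr → IsMaxC (l ++ x :: r) (.node tl x tr)

namespace StmtAux

lemma mid_get (l : List ℕ) (x : ℕ) (r : List ℕ) : (l ++ x :: r)[l.length]? = some x := by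
  rw [List.getElem?_append_right le_rfl]; simp

lemma left_get (l : List ℕ) (x : ℕ) (r : List ℕ) (k : ℕ) (h : k < l.length) :
    (l ++ x :: r)[k]? = l[k]? := List.getElem?_append_left h

lemma right_get (l : List ℕ) (x : ℕ) (r : List ℕ) (k : ℕ) (h : l.length < k) :
    (l ++ x :: r)[k]? = r[k - (l.length + 1)]? := by
  rw [List.getElem?_append_right (le_of_lt h)]
  obtain ⟨d, rfl⟩ : ∃ d, k = l.length + 1 + d := ⟨k - (l.length+1), by omega⟩
  have h1 : l.length + 1 + d - l.length = d + 1 := by omega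
  have h2 : l.length + 1 + d - (l.length + 1) = d := by omega
  rw [h1, h2, List.getElem?_cons_succ]

lemma lcr_mem {t : BTree} {p c : ℕ} (h : leftChildRel t p c) : c ∈ t.inorder := by
  induction t with
  | leaf => cases h
  | node a x b iha ihb =>
    rcases h with ⟨rfl, h2⟩ | h | h
    · cases a with
      | leaf => cases h2
      | node a1 y a2 =>
        simp only [BTree.rootLabel] at h2
        cases h2
        simp [BTree.inorder]
    · have := iha h; simp [BTree.inorder]; tauto
    · have := ihb h; simp [BTree.inorder]; tauto

lemma rcr_mem {t : BTree} {p c : ℕ} (h : rightChildRel t p c) : c ∈ t.inorder := by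
  induction t with
  | leaf => cases h
  | node a x b iha ihb =>
    rcases h with ⟨rfl, h2⟩ | h | h
    · cases b with
      | leaf => cases h2
      | node b1 y b2 =>
        simp only [BTree.rootLabel] at h2
        cases h2
        simp [BTree.inorder]
    · have := iha h; simp [BTree.inorder]; tauto
    · have := ihb h; simp [BTree.inorder]; tauto

lemma IsMinC_inorder {S : List ℕ} {t : BTree} (h : IsMinC S t) : t.inorder = S := by
  induction h with
  | leaf => rfl
  | node l r x tl tr hl hr hml hmr ihl ihr => simp [BTree.inorder, ihl, ihr]

lemma IsMaxC_inorder {S : List ℕ} {t : BTree} (h : IsMaxC S t) : t.inorder = S := by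
  induction h with
  | leaf => rfl
  | node l r x tl tr hl hr hml hmr ihl ihr => simp [BTree.inorder, ihl, ihr]

lemma IsMinC_root_min {S : List ℕ} {t : BTree} (h : IsMinC S t) {x : ℕ}
    (hx : t.rootLabel = some x) : x ∈ S ∧ ∀ y ∈ S, y ≠ x → x < y := by
  cases h with
  | leaf => cases hx
  | node l r x' tl tr hl hr hml hmr =>
    simp only [BTree.rootLabel] at hx
    cases hx
    constructor
    · simp
    · intro y hy hne
      rcases List.mem_append.mp hy with h1 | h1
      · exact hl y h1
      · rcases List.mem_cons.mp h1 with rfl | h2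
        · exact absurd rfl hne
        · exact hr y h2

lemma IsMaxC_root_max {S : List ℕ} {t : BTree} (h : IsMaxC S t) {x : ℕ}
    (hx : t.rootLabel = some x) : x ∈ S ∧ ∀ y ∈ S, y ≠ x → y < x := by
  cases h with
  | leaf => cases hx
  | node l r x' tl tr hl hr hml hmr =>
    simp only [BTree.rootLabel] at hx
    cases hx
    constructor
    · simp
    · intro y hy hne
      rcases List.mem_append.mp hy with h1 | h1
      · exact hl y h1
      · rcases List.mem_cons.mp h1 with rfl | h2
        · exact absurd rfl hne
        · exact hr y h2

end StmtAux

namespace StmtAux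

lemma nodup_idx {S : List ℕ} (h : S.Nodup) {i j y : ℕ}
    (hi : S[i]? = some y) (hj : S[j]? = some y) : i = j :=
  (List.getElem?_inj (List.getElem?_eq_some_iff.mp hi).1 h).mp (hi.trans hj.symm)

def LCcond (S : List ℕ) (v : ℕ) : Prop :=
  ∃ i j b : ℕ, i < j ∧ S[i]? = some v ∧ S[j]? = some b ∧ b < v ∧
    (∀ k y : ℕ, i < k → k < j → S[k]? = some y → v < y) ∧
    (∀ s a : ℕ, s < i → S[s]? = some a → a < v →
      (∀ k y : ℕ, s < k → k < i → S[k]? = some y → v < y) → a < b)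

lemma LC_right_iff (l : List ℕ) (x : ℕ) (r : List ℕ) (v : ℕ)
    (hr : ∀ y ∈ r, x < y) (hx : x < v) (hvl : v ∉ l) :
    LCcond r v ↔ LCcond (l ++ x :: r) v := by
  set m := l.length with hm
  constructor
  · rintro ⟨i, j, b, hij, hi, hj, hb, hmid, hleft⟩
    refine ⟨m + 1 + i, m + 1 + j, b, by omega, ?_, ?_, hb, ?_, ?_⟩
    · rw [right_get l x r _ (by omega)]
      have h1 : m + 1 + i - (m + 1) = i := by omega
      rw [← hm, h1]; exact hi
    · rw [right_get l x r _ (by omega)]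
      have h1 : m + 1 + j - (m + 1) = j := by omega
      rw [← hm, h1]; exact hj
    · intro k y hk1 hk2 hky
      rw [right_get l x r _ (by omega)] at hky
      exact hmid _ y (by omega) (by omega) hky
    · intro s a hs hsa hav hnear
      rcases lt_trichotomy s m with hsm | hsm | hsm
      · exfalso
        have := hnear m x (by omega) (by omega) (mid_get l x r)
        omega
      · have hax : a = x := by
          rw [hsm, mid_get l x r] at hsa
          exact (Option.some_inj.mp hsa).symm
        have : x < b := hr b (List.mem_of_getElem? hj)
        omega
      · rw [right_get l x r _ (by omega)] at hsa
        apply hleft (s - (m + 1)) a (by omega) hsa hav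
        intro k y hk1 hk2 hky
        have h2 : (l ++ x :: r)[m + 1 + k]? = some y := by
          rw [right_get l x r _ (by omega)]
          have h1 : m + 1 + k - (m + 1) = k := by omega
          rw [← hm, h1]; exact hky
        exact hnear (m + 1 + k) y (by omega) (by omega) h2
  · rintro ⟨i, j, b, hij, hi, hj, hb, hmid, hleft⟩
    have him : m < i := by
      rcases lt_trichotomy i m with h | h | h
      · exact absurd (List.mem_of_getElem? ((left_get l x r _ h).symm.trans hi)) hvl
      · rw [h, mid_get l x r] at hi
        exact absurd (Option.some_inj.mp hi) (by omega)
      · exact h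
    refine ⟨i - (m + 1), j - (m + 1), b, by omega, ?_, ?_, hb, ?_, ?_⟩
    · rw [← right_get l x r _ him]; exact hi
    · rw [← right_get l x r _ (by omega)]; exact hj
    · intro k y hk1 hk2 hky
      apply hmid (m + 1 + k) y (by omega) (by omega)
      rw [right_get l x r _ (by omega)]
      have h1 : m + 1 + k - (m + 1) = k := by omega
      rw [← hm, h1]; exact hky
    · intro s a hs hsa hav hnear
      apply hleft (m + 1 + s) a (by omega) ?_ hav
      · intro k y hk1 hk2 hky
        rw [right_get l x r _ (by omega)] at hky
        exact hnear (k - (m + 1)) y (by omega) (by omega) hky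
      · rw [right_get l x r _ (by omega)]
        have h1 : m + 1 + s - (m + 1) = s := by omega
        rw [← hm, h1]; exact hsa

lemma LC_left_iff (l : List ℕ) (x : ℕ) (r : List ℕ) (v : ℕ)
    (hl : ∀ y ∈ l, x < y) (hndl : l.Nodup) (hvr : v ∉ r) (hx : x < v)
    (hex : ∃ u ∈ l, u < v) :
    LCcond l v ↔ LCcond (l ++ x :: r) v := by
  classical
  set m := l.length with hm
  constructor
  · rintro ⟨i, j, b, hij, hi, hj, hb, hmid, hleft⟩
    have hjm : j < m := (List.getElem?_eq_some_iff.mp hj).1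
    refine ⟨i, j, b, hij, ?_, ?_, hb, ?_, ?_⟩
    · rw [left_get l x r _ (by omega)]; exact hi
    · rw [left_get l x r _ hjm]; exact hj
    · intro k y hk1 hk2 hky
      rw [left_get l x r _ (by omega)] at hky
      exact hmid k y hk1 hk2 hky
    · intro s a hs hsa hav hnear
      rw [left_get l x r _ (by omega)] at hsa
      apply hleft s a hs hsa hav
      intro k y hk1 hk2 hky
      apply hnear k y hk1 hk2
      rw [left_get l x r _ (by omega)]; exact hky
  · rintro ⟨i, j, b, hij, hi, hj, hb, hmid, hleft⟩
    have him : i < m := by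
      rcases lt_trichotomy i m with h | h | h
      · exact h
      · rw [h, mid_get l x r] at hi
        exact absurd (Option.some_inj.mp hi) (by omega)
      · rw [right_get l x r _ h] at hi
        exact absurd (List.mem_of_getElem? hi) hvr
    have hil : l[i]? = some v := (left_get l x r _ him).symm.trans hi
    rcases lt_trichotomy j m with hjm | hjm | hjm
    · refine ⟨i, j, b, hij, hil, (left_get l x r _ hjm).symm.trans hj, hb, ?_, ?_⟩
      · intro k y hk1 hk2 hky
        rw [← left_get l x r k (by omega)] at hky
        exact hmid k y hk1 hk2 hky
      · intro s a hs hsa hav hnear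
        rw [← left_get l x r s (by omega)] at hsa
        apply hleft s a hs hsa hav
        intro k y hk1 hk2 hky
        rw [left_get l x r k (by omega)] at hky
        exact hnear k y hk1 hk2 hky
    · exfalso
      have hbx : b = x := by
        rw [hjm, mid_get l x r] at hj
        exact (Option.some_inj.mp hj).symm
      obtain ⟨u, hu, huv⟩ := hex
      obtain ⟨s0, hs0⟩ := List.mem_iff_getElem?.mp hu
      have hs0m : s0 < m := (List.getElem?_eq_some_iff.mp hs0).1
      have hs0i : s0 < i := by
        rcases lt_trichotomy s0 i with h | h | h
        · exact h
        · exfalso; rw [h, hil] at hs0; have := Option.some_inj.mp hs0; omega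
        · exfalso
          have := hmid s0 u h (by omega) (by rw [left_get l x r s0 hs0m]; exact hs0)
          omega
      set P : ℕ → Prop := fun t => l[t]?.getD v < v with hP
      have hPs0 : P s0 := by simp only [hP, hs0, Option.getD_some]; exact huv
      set s := Nat.findGreatest P (i - 1) with hsdef
      have hPs : P s := Nat.findGreatest_spec (by omega) hPs0
      have hsle : s ≤ i - 1 := Nat.findGreatest_le _
      have hsm : s < m := by omega
      have hsl : l[s]? = some l[s] := List.getElem?_eq_getElem hsm
      have hav : l[s] < v := by
        have h2 := hPs
        rw [hP] at h2
        simpa [hsl] using h2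
      have hxa : x < l[s] := hl _ (List.getElem_mem hsm)
      have : l[s] < b := by
        apply hleft s l[s] (by omega) (by rw [left_get l x r s hsm]; exact hsl) hav
        intro k y hk1 hk2 hky
        have hkm : k < m := by omega
        rw [left_get l x r _ hkm] at hky
        have hnp : ¬ P k := Nat.findGreatest_is_greatest hk1 (by omega)
        have h5 : v ≤ y := by
          by_contra h6
          exact hnp (by simp only [hP, hky, Option.getD_some]; omega)
        have h7 : y ≠ v := by
          intro he
          subst he
          have := nodup_idx hndl hky hil
          omega
        omega
      omega
    · exfalso
      have := hmid m x (by omega) hjm (mid_get l x r)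
      omega

end StmtAux

namespace StmtAux

lemma IsMinC_ne_nil_root {S : List ℕ} {t : BTree} (h : IsMinC S t) (hS : S ≠ []) :
    ∃ w, t.rootLabel = some w := by
  cases h with
  | leaf => exact absurd rfl hS
  | node l r x tl tr => exact ⟨x, rfl⟩

lemma minC_iff {S : List ℕ} {t : BTree} (h : IsMinC S t) :
    ∀ v : ℕ, S.Nodup → ((∃ p, leftChildRel t p v) ↔ LCcond S v) := by
  induction h with
  | leaf =>
    intro v _
    constructor
    · rintro ⟨p, hp⟩; cases hp
    · rintro ⟨i, j, b, _, hi, _⟩; simp at hi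
  | node l r x tl tr hl hr hml hmr ihl ihr =>
    intro v hnd
    have hnd' := List.nodup_middle.mp hnd
    rw [List.nodup_cons] at hnd'
    obtain ⟨hxm, hndlr⟩ := hnd'
    rw [List.nodup_append] at hndlr
    obtain ⟨hndl, hndr, hdisj⟩ := hndlr
    have hxl : x ∉ l := fun h2 => hxm (List.mem_append.mpr (Or.inl h2))
    have hxr : x ∉ r := fun h2 => hxm (List.mem_append.mpr (Or.inr h2))
    have hLHS : (∃ p, leftChildRel (BTree.node tl x tr) p v) ↔
        (tl.rootLabel = some v ∨ (∃ p, leftChildRel tl p v) ∨ (∃ p, leftChildRel tr p v)) := by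
      constructor
      · rintro ⟨p, hp⟩
        simp only [leftChildRel] at hp
        rcases hp with ⟨_, h2⟩ | h2 | h2
        exacts [Or.inl h2, Or.inr (Or.inl ⟨p, h2⟩), Or.inr (Or.inr ⟨p, h2⟩)]
      · rintro (h2 | ⟨p, h2⟩ | ⟨p, h2⟩)
        · exact ⟨x, Or.inl ⟨rfl, h2⟩⟩
        · exact ⟨p, Or.inr (Or.inl h2)⟩
        · exact ⟨p, Or.inr (Or.inr h2)⟩
    rw [hLHS]
    by_cases hvl : v ∈ l
    · have hvr : v ∉ r := fun h2 => hdisj v hvl v h2 rfl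
      have hxv : x < v := hl v hvl
      have h3 : ¬ (∃ p, leftChildRel tr p v) := by
        rintro ⟨p, hp⟩
        have := lcr_mem hp
        rw [IsMinC_inorder hmr] at this
        exact hvr this
      by_cases hex : ∃ u ∈ l, u < v
      · have h1 : ¬ (tl.rootLabel = some v) := by
          intro h2
          obtain ⟨_, hmin2⟩ := IsMinC_root_min hml h2
          obtain ⟨u, hu, huv⟩ := hex
          have := hmin2 u hu (by omega)
          omega
        rw [← LC_left_iff l x r v hl hndl hvr hxv hex, ← ihl v hndl]
        tauto
      · push_neg at hex
        have hroot : tl.rootLabel = some v := by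
          obtain ⟨w, hw⟩ := IsMinC_ne_nil_root hml (List.ne_nil_of_mem hvl)
          obtain ⟨hwl, hwmin⟩ := IsMinC_root_min hml hw
          rcases eq_or_ne v w with rfl | hne
          · exact hw
          · have h4 := hwmin v hvl hne
            have h5 := hex w hwl
            omega
        have hLC : LCcond (l ++ x :: r) v := by
          obtain ⟨i0, hi0⟩ := List.mem_iff_getElem?.mp hvl
          have hi0m : i0 < l.length := (List.getElem?_eq_some_iff.mp hi0).1
          refine ⟨i0, l.length, x, hi0m, ?_, mid_get l x r, hxv, ?_, ?_⟩
          · rw [left_get l x r _ hi0m]; exact hi0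
          · intro k y hk1 hk2 hky
            rw [left_get l x r k hk2] at hky
            have hy : v ≤ y := hex y (List.mem_of_getElem? hky)
            have hne : y ≠ v := by
              intro he
              subst he
              have := nodup_idx hndl hky hi0
              omega
            omega
          · intro s a hs hsa hav _
            exfalso
            rw [left_get l x r s (by omega)] at hsa
            have := hex a (List.mem_of_getElem? hsa)
            omega
        exact iff_of_true (Or.inl hroot) hLC
    · by_cases hvx : v = x
      · subst hvx
        refine iff_of_false ?_ ?_
        · rintro (h2 | ⟨p, hp⟩ | ⟨p, hp⟩)
          · exact hvl (IsMinC_root_min hml h2).1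
          · have := lcr_mem hp; rw [IsMinC_inorder hml] at this; exact hvl this
          · have := lcr_mem hp; rw [IsMinC_inorder hmr] at this; exact hxr this
        · rintro ⟨i, j, b, hij, hi, hj, hb, _, _⟩
          have hbS := List.mem_of_getElem? hj
          rcases List.mem_append.mp hbS with h2 | h2
          · have := hl b h2; omega
          · rcases List.mem_cons.mp h2 with rfl | h2
            · omega
            · have := hr b h2; omega
      · by_cases hvr : v ∈ r
        · have hxv : x < v := hr v hvr
          have h1 : ¬ (tl.rootLabel = some v) := fun h2 => hvl (IsMinC_root_min hml h2).1
          have h2 : ¬ (∃ p, leftChildRel tl p v) := by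
            rintro ⟨p, hp⟩
            have := lcr_mem hp; rw [IsMinC_inorder hml] at this; exact hvl this
          rw [← LC_right_iff l x r v hr hxv hvl, ← ihr v hndr]
          tauto
        · refine iff_of_false ?_ ?_
          · rintro (h2 | ⟨p, hp⟩ | ⟨p, hp⟩)
            · exact hvl (IsMinC_root_min hml h2).1
            · have := lcr_mem hp; rw [IsMinC_inorder hml] at this; exact hvl this
            · have := lcr_mem hp; rw [IsMinC_inorder hmr] at this; exact hvr this
          · rintro ⟨i, j, b, hij, hi, hj, hb, _, _⟩
            have hvS := List.mem_of_getElem? hi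
            rcases List.mem_append.mp hvS with h2 | h2
            · exact hvl h2
            · rcases List.mem_cons.mp h2 with h2 | h2
              · exact hvx h2
              · exact hvr h2

end StmtAux

namespace StmtAux

def RCcond (S : List ℕ) (v : ℕ) : Prop :=
  ∃ i j a : ℕ, j < i ∧ S[j]? = some a ∧ S[i]? = some v ∧ v < a ∧
    (∀ k y : ℕ, j < k → k < i → S[k]? = some y → y < v) ∧
    (∀ s b : ℕ, i < s → S[s]? = some b → v < b →
      (∀ k y : ℕ, i < k → k < s → S[k]? = some y → y < v) → a < b)

lemma RC_left_iff (l : List ℕ) (x : ℕ) (r : List ℕ) (v : ℕ)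
    (hl : ∀ y ∈ l, y < x) (hx : v < x) (hvr : v ∉ r) :
    RCcond l v ↔ RCcond (l ++ x :: r) v := by
  set m := l.length with hm
  constructor
  · rintro ⟨i, j, a, hji, hj, hi, ha, hmid, hright⟩
    have him : i < m := (List.getElem?_eq_some_iff.mp hi).1
    refine ⟨i, j, a, hji, ?_, ?_, ha, ?_, ?_⟩
    · rw [left_get l x r _ (by omega)]; exact hj
    · rw [left_get l x r _ him]; exact hi
    · intro k y hk1 hk2 hky
      rw [left_get l x r k (by omega)] at hky
      exact hmid k y hk1 hk2 hky
    · intro s b hs hsb hvb hnear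
      rcases lt_trichotomy s m with hsm | hsm | hsm
      · rw [left_get l x r s hsm] at hsb
        apply hright s b hs hsb hvb
        intro k y hk1 hk2 hky
        apply hnear k y hk1 hk2
        rw [left_get l x r k (by omega)]; exact hky
      · have hbx : b = x := by
          rw [hsm, mid_get l x r] at hsb
          exact (Option.some_inj.mp hsb).symm
        have : a < x := hl a (List.mem_of_getElem? hj)
        omega
      · exfalso
        have := hnear m x (by omega) (by omega) (mid_get l x r)
        omega
  · rintro ⟨i, j, a, hji, hj, hi, ha, hmid, hright⟩
    have him : i < m := by
      rcases lt_trichotomy i m with h | h | h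
      · exact h
      · rw [h, mid_get l x r] at hi
        exact absurd (Option.some_inj.mp hi) (by omega)
      · rw [right_get l x r _ h] at hi
        exact absurd (List.mem_of_getElem? hi) hvr
    refine ⟨i, j, a, hji, ?_, ?_, ha, ?_, ?_⟩
    · rw [← left_get l x r j (by omega)]; exact hj
    · rw [← left_get l x r i him]; exact hi
    · intro k y hk1 hk2 hky
      rw [← left_get l x r k (by omega)] at hky
      exact hmid k y hk1 hk2 hky
    · intro s b hs hsb hvb hnear
      have hsm : s < m := (List.getElem?_eq_some_iff.mp hsb).1
      rw [← left_get l x r s hsm] at hsb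
      apply hright s b hs hsb hvb
      intro k y hk1 hk2 hky
      rw [left_get l x r k (by omega)] at hky
      exact hnear k y hk1 hk2 hky

lemma RC_right_iff (l : List ℕ) (x : ℕ) (r : List ℕ) (v : ℕ)
    (hr : ∀ y ∈ r, y < x) (hndr : r.Nodup) (hvl : v ∉ l) (hx : v < x)
    (hex : ∃ u ∈ r, v < u) :
    RCcond r v ↔ RCcond (l ++ x :: r) v := by
  classical
  set m := l.length with hm
  constructor
  · rintro ⟨i, j, a, hji, hj, hi, ha, hmid, hright⟩
    refine ⟨m + 1 + i, m + 1 + j, a, by omega, ?_, ?_, ha, ?_, ?_⟩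
    · rw [right_get l x r _ (by omega)]
      have h1 : m + 1 + j - (m + 1) = j := by omega
      rw [← hm, h1]; exact hj
    · rw [right_get l x r _ (by omega)]
      have h1 : m + 1 + i - (m + 1) = i := by omega
      rw [← hm, h1]; exact hi
    · intro k y hk1 hk2 hky
      rw [right_get l x r _ (by omega)] at hky
      exact hmid _ y (by omega) (by omega) hky
    · intro s b hs hsb hvb hnear
      rw [right_get l x r _ (by omega)] at hsb
      apply hright (s - (m + 1)) b (by omega) hsb hvb
      intro k y hk1 hk2 hky
      have h2 : (l ++ x :: r)[m + 1 + k]? = some y := by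
        rw [right_get l x r _ (by omega)]
        have h1 : m + 1 + k - (m + 1) = k := by omega
        rw [← hm, h1]; exact hky
      exact hnear (m + 1 + k) y (by omega) (by omega) h2
  · rintro ⟨i, j, a, hji, hj, hi, ha, hmid, hright⟩
    have him : m < i := by
      rcases lt_trichotomy i m with h | h | h
      · exact absurd (List.mem_of_getElem? ((left_get l x r _ h).symm.trans hi)) hvl
      · rw [h, mid_get l x r] at hi
        exact absurd (Option.some_inj.mp hi) (by omega)
      · exact h
    have hir : r[i - (m + 1)]? = some v := by
      rw [← right_get l x r i him]; exact hi
    rcases lt_trichotomy j m with hjm | hjm | hjm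
    · exfalso
      have := hmid m x hjm (by omega) (mid_get l x r)
      omega
    · exfalso
      have hax : a = x := by
        rw [hjm, mid_get l x r] at hj
        exact (Option.some_inj.mp hj).symm
      obtain ⟨u, hu, huv⟩ := hex
      obtain ⟨s0, hs0⟩ := List.mem_iff_getElem?.mp hu
      set i0 := i - (m + 1) with hi0
      have hs0i : i0 < s0 := by
        rcases lt_trichotomy s0 i0 with h | h | h
        · exfalso
          have h9 : (l ++ x :: r)[m + 1 + s0]? = some u := by
            rw [right_get l x r _ (by omega)]
            have h1 : m + 1 + s0 - (m + 1) = s0 := by omega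
            rw [← hm, h1]; exact hs0
          have := hmid (m + 1 + s0) u (by omega) (by omega) h9
          omega
        · exfalso; rw [h, hir] at hs0; have := Option.some_inj.mp hs0; omega
        · exact h
      set P : ℕ → Prop := fun t => i0 < t ∧ v < r[t]?.getD v with hP
      have hPex : ∃ t, P t := ⟨s0, hs0i, by simp only [hs0, Option.getD_some]; exact huv⟩
      set s := Nat.find hPex with hsdef
      obtain ⟨hsi, hsv⟩ := Nat.find_spec hPex
      have hsb : ∃ b, r[s]? = some b ∧ v < b := by
        cases h9 : r[s]? with
        | none => rw [h9] at hsv; simp at hsv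
        | some b => rw [h9] at hsv; exact ⟨b, rfl, by simpa using hsv⟩
      obtain ⟨b, hsb1, hsb2⟩ := hsb
      have hblt : b < x := hr b (List.mem_of_getElem? hsb1)
      have : a < b := by
        apply hright (m + 1 + s) b (by omega) ?_ hsb2
        · intro k y hk1 hk2 hky
          rw [right_get l x r _ (by omega)] at hky
          set t := k - (m + 1) with ht
          have htr : i0 < t ∧ t < s := by omega
          have hnp : ¬ P t := Nat.find_min hPex (by omega)
          have h5 : y ≤ v := by
            by_contra h6
            exact hnp ⟨htr.1, by simp only [hky, Option.getD_some]; omega⟩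
          have h7 : y ≠ v := by
            intro he
            subst he
            have := nodup_idx hndr hky hir
            omega
          omega
        · rw [right_get l x r _ (by omega)]
          have h1 : m + 1 + s - (m + 1) = s := by omega
          rw [← hm, h1]; exact hsb1
      omega
    · refine ⟨i - (m + 1), j - (m + 1), a, by omega, ?_, hir, ha, ?_, ?_⟩
      · rw [← right_get l x r j (by omega)]; exact hj
      · intro k y hk1 hk2 hky
        apply hmid (m + 1 + k) y (by omega) (by omega)
        rw [right_get l x r _ (by omega)]
        have h1 : m + 1 + k - (m + 1) = k := by omega
        rw [← hm, h1]; exact hky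
      · intro s b hs hsb hvb hnear
        apply hright (m + 1 + s) b (by omega) ?_ hvb
        · intro k y hk1 hk2 hky
          rw [right_get l x r _ (by omega)] at hky
          exact hnear (k - (m + 1)) y (by omega) (by omega) hky
        · rw [right_get l x r _ (by omega)]
          have h1 : m + 1 + s - (m + 1) = s := by omega
          rw [← hm, h1]; exact hsb

lemma IsMaxC_ne_nil_root {S : List ℕ} {t : BTree} (h : IsMaxC S t) (hS : S ≠ []) :
    ∃ w, t.rootLabel = some w := by
  cases h with
  | leaf => exact absurd rfl hS
  | node l r x tl tr => exact ⟨x, rfl⟩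

lemma maxC_iff {S : List ℕ} {t : BTree} (h : IsMaxC S t) :
    ∀ v : ℕ, S.Nodup → ((∃ p, rightChildRel t p v) ↔ RCcond S v) := by
  induction h with
  | leaf =>
    intro v _
    constructor
    · rintro ⟨p, hp⟩; cases hp
    · rintro ⟨i, j, a, _, _, hi, _⟩; simp at hi
  | node l r x tl tr hl hr hml hmr ihl ihr =>
    intro v hnd
    have hnd' := List.nodup_middle.mp hnd
    rw [List.nodup_cons] at hnd'
    obtain ⟨hxm, hndlr⟩ := hnd'
    rw [List.nodup_append] at hndlr
    obtain ⟨hndl, hndr, hdisj⟩ := hndlr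
    have hxl : x ∉ l := fun h2 => hxm (List.mem_append.mpr (Or.inl h2))
    have hxr : x ∉ r := fun h2 => hxm (List.mem_append.mpr (Or.inr h2))
    have hRHS : (∃ p, rightChildRel (BTree.node tl x tr) p v) ↔
        (tr.rootLabel = some v ∨ (∃ p, rightChildRel tl p v) ∨ (∃ p, rightChildRel tr p v)) := by
      constructor
      · rintro ⟨p, hp⟩
        simp only [rightChildRel] at hp
        rcases hp with ⟨_, h2⟩ | h2 | h2
        exacts [Or.inl h2, Or.inr (Or.inl ⟨p, h2⟩), Or.inr (Or.inr ⟨p, h2⟩)]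
      · rintro (h2 | ⟨p, h2⟩ | ⟨p, h2⟩)
        · exact ⟨x, Or.inl ⟨rfl, h2⟩⟩
        · exact ⟨p, Or.inr (Or.inl h2)⟩
        · exact ⟨p, Or.inr (Or.inr h2)⟩
    rw [hRHS]
    by_cases hvr : v ∈ r
    · have hvl : v ∉ l := fun h2 => hdisj v h2 v hvr rfl
      have hxv : v < x := hr v hvr
      have h3 : ¬ (∃ p, rightChildRel tl p v) := by
        rintro ⟨p, hp⟩
        have := rcr_mem hp
        rw [IsMaxC_inorder hml] at this
        exact hvl this
      by_cases hex : ∃ u ∈ r, v < u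
      · have h1 : ¬ (tr.rootLabel = some v) := by
          intro h2
          obtain ⟨_, hmax2⟩ := IsMaxC_root_max hmr h2
          obtain ⟨u, hu, huv⟩ := hex
          have := hmax2 u hu (by omega)
          omega
        rw [← RC_right_iff l x r v hr hndr hvl hxv hex, ← ihr v hndr]
        tauto
      · push_neg at hex
        have hroot : tr.rootLabel = some v := by
          obtain ⟨w, hw⟩ := IsMaxC_ne_nil_root hmr (List.ne_nil_of_mem hvr)
          obtain ⟨hwr, hwmax⟩ := IsMaxC_root_max hmr hw
          rcases eq_or_ne v w with rfl | hne
          · exact hw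
          · have h4 := hwmax v hvr hne
            have h5 := hex w hwr
            omega
        have hRC : RCcond (l ++ x :: r) v := by
          obtain ⟨i0, hi0⟩ := List.mem_iff_getElem?.mp hvr
          set m := l.length with hm
          refine ⟨m + 1 + i0, m, x, by omega, mid_get l x r, ?_, hxv, ?_, ?_⟩
          · rw [right_get l x r _ (by omega)]
            have h1 : m + 1 + i0 - (m + 1) = i0 := by omega
            rw [← hm, h1]; exact hi0
          · intro k y hk1 hk2 hky
            rw [right_get l x r k (by omega)] at hky
            have hy : y ≤ v := hex y (List.mem_of_getElem? hky)
            have hne : y ≠ v := by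
              intro he
              subst he
              have := nodup_idx hndr hky hi0
              omega
            omega
          · intro s b hs hsb hvb _
            exfalso
            rw [right_get l x r s (by omega)] at hsb
            have := hex b (List.mem_of_getElem? hsb)
            omega
        exact iff_of_true (Or.inl hroot) hRC
    · by_cases hvx : v = x
      · subst hvx
        refine iff_of_false ?_ ?_
        · rintro (h2 | ⟨p, hp⟩ | ⟨p, hp⟩)
          · exact hvr (IsMaxC_root_max hmr h2).1
          · have := rcr_mem hp; rw [IsMaxC_inorder hml] at this; exact hxl this
          · have := rcr_mem hp; rw [IsMaxC_inorder hmr] at this; exact hvr this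
        · rintro ⟨i, j, a, hji, hj, hi, ha, _, _⟩
          have haS := List.mem_of_getElem? hj
          rcases List.mem_append.mp haS with h2 | h2
          · have := hl a h2; omega
          · rcases List.mem_cons.mp h2 with rfl | h2
            · omega
            · have := hr a h2; omega
      · by_cases hvl : v ∈ l
        · have hxv : v < x := hl v hvl
          have h1 : ¬ (tr.rootLabel = some v) := fun h2 => hvr (IsMaxC_root_max hmr h2).1
          have h2 : ¬ (∃ p, rightChildRel tr p v) := by
            rintro ⟨p, hp⟩
            have := rcr_mem hp; rw [IsMaxC_inorder hmr] at this; exact hvr this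
          rw [← RC_left_iff l x r v hl hxv hvr, ← ihl v hndl]
          tauto
        · refine iff_of_false ?_ ?_
          · rintro (h2 | ⟨p, hp⟩ | ⟨p, hp⟩)
            · exact hvr (IsMaxC_root_max hmr h2).1
            · have := rcr_mem hp; rw [IsMaxC_inorder hml] at this; exact hvl this
            · have := rcr_mem hp; rw [IsMaxC_inorder hmr] at this; exact hvr this
          · rintro ⟨i, j, a, hji, hj, hi, ha, _, _⟩
            have hvS := List.mem_of_getElem? hi
            rcases List.mem_append.mp hvS with h2 | h2
            · exact hvl h2
            · rcases List.mem_cons.mp h2 with h2 | h2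
              · exact hvx h2
              · exact hvr h2

end StmtAux

namespace StmtAux

lemma permList_get (n : ℕ) (π : ℕ → ℕ) {k : ℕ} (h : k < n) :
    (permList n π)[k]? = some (π (k + 1)) := by
  unfold permList
  rw [List.getElem?_map, List.getElem?_range h]
  rfl

lemma permList_get' {n : ℕ} {π : ℕ → ℕ} {k y : ℕ} (h : (permList n π)[k]? = some y) :
    k < n ∧ y = π (k + 1) := by
  have hk : k < n := by
    have := (List.getElem?_eq_some_iff.mp h).1
    simpa [permList] using this
  rw [permList_get n π hk] at h
  exact ⟨hk, (Option.some_inj.mp h).symm⟩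

lemma permList_nodup (n : ℕ) (π : ℕ → ℕ) (hperm : IsPermOn n π) :
    (permList n π).Nodup := by
  apply List.Nodup.map_on ?_ List.nodup_range
  intro a ha b hb he
  have ha' : a < n := List.mem_range.mp ha
  have hb' : b < n := List.mem_range.mp hb
  have := hperm.injOn (Set.mem_Icc.mpr ⟨by omega, by omega⟩)
    (Set.mem_Icc.mpr ⟨by omega, by omega⟩) he
  omega

section Claims

variable {n : ℕ} {π : ℕ → ℕ} {i p q : ℕ}
variable (hbax : IsBaxter n π)
variable (hinj : ∀ a b, 1 ≤ a → a ≤ n → 1 ≤ b → b ≤ n → π a = π b → a = b)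
variable (hp1 : 1 ≤ p) (hpn : p ≤ n) (hq1 : 1 ≤ q) (hqn : q ≤ n)
variable (hpi : π p = i) (hqi : π q = i + 1)

include hbax hinj hp1 hpn hq1 hqn hpi hqi

lemma claim7a (hqp : q < p) : LCcond (permList n π) (i + 1) := by
  classical
  have hPex : ∃ t, q < t ∧ t ≤ n ∧ π t < i + 1 := ⟨p, hqp, hpn, by rw [hpi]; omega⟩
  set r := Nat.find hPex with hrdef
  obtain ⟨hqr, hrn, hrv⟩ := Nat.find_spec hPex
  have hmidf : ∀ k, q < k → k < r → i + 1 < π k := by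
    intro k hk1 hk2
    have h1 : ¬ (π k < i + 1) := fun h2 => Nat.find_min hPex hk2 ⟨hk1, by omega, h2⟩
    have h2 : π k ≠ i + 1 := by
      intro he
      have := hinj k q (by omega) (by omega) hq1 hqn (he.trans hqi.symm)
      omega
    omega
  refine ⟨q - 1, r - 1, π r, by omega, ?_, ?_, hrv, ?_, ?_⟩
  · rw [permList_get n π (show q - 1 < n by omega), show q - 1 + 1 = q by omega, hqi]
  · rw [permList_get n π (show r - 1 < n by omega), show r - 1 + 1 = r by omega]
  · intro k y hk1 hk2 hky
    obtain ⟨hkn, rfl⟩ := permList_get' hky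
    exact hmidf (k + 1) (by omega) (by omega)
  · intro s0 a hs0 hsa hav hnear
    obtain ⟨hs0n, rfl⟩ := permList_get' hsa
    by_contra hab
    push_neg at hab
    have hne : π r ≠ π (s0 + 1) := by
      intro he
      have := hinj r (s0 + 1) (by omega) hrn (by omega) (by omega) he
      omega
    have hai : π (s0 + 1) ≠ i := by
      intro he
      have := hinj (s0 + 1) p (by omega) (by omega) hp1 hpn (he.trans hpi.symm)
      omega
    have hav' : π (s0 + 1) < i := by omega
    have hrp : r ≤ p := Nat.find_min' hPex ⟨hqp, hpn, by rw [hpi]; omega⟩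
    have hri : π r < i := by omega
    have hrnep : r ≠ p := by
      intro he
      rw [he, hpi] at hri
      omega
    have hb := (hbax (s0 + 1) (r - 1) p (by omega) (by omega) (by omega) hpn).1
    apply hb
    refine ⟨?_, ?_, ?_⟩
    · rw [show r - 1 + 1 = r by omega]; omega
    · rw [hpi]; omega
    · rw [hpi]
      rcases eq_or_ne (r - 1) q with he | he
      · rw [he, hqi]; omega
      · have := hmidf (r - 1) (by omega) (by omega); omega

lemma claim7b (hpq : p < q) : ¬ LCcond (permList n π) (i + 1) := by
  rintro ⟨i0, j0, b, hij, hgi, hgj, hblt, hmid, hleft⟩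
  obtain ⟨hi0n, hi0v⟩ := permList_get' hgi
  have hq' : i0 + 1 = q :=
    hinj (i0 + 1) q (by omega) (by omega) hq1 hqn (hi0v.symm.trans hqi.symm)
  obtain ⟨hj0n, hj0v⟩ := permList_get' hgj
  have hqr : q < j0 + 1 := by omega
  classical
  have hQp : 1 ≤ p ∧ π p < i + 1 := ⟨hp1, by rw [hpi]; omega⟩
  set s := Nat.findGreatest (fun t => 1 ≤ t ∧ π t < i + 1) (q - 1) with hsdef
  have hps : p ≤ s := Nat.le_findGreatest (by omega) hQp
  have hsq : s ≤ q - 1 := Nat.findGreatest_le _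
  obtain ⟨hs1, hsv⟩ : 1 ≤ s ∧ π s < i + 1 := Nat.findGreatest_spec (P := fun t => 1 ≤ t ∧ π t < i + 1) (show p ≤ q - 1 by omega) hQp
  have hmax : ∀ k, s < k → k ≤ q - 1 → i + 1 < π k := by
    intro k hk1 hk2
    have hnq := Nat.findGreatest_is_greatest (hsdef ▸ hk1) hk2
    have h1 : ¬ (π k < i + 1) := fun h2 => hnq ⟨by omega, h2⟩
    have h2 : π k ≠ i + 1 := by
      intro he
      have := hinj k q (by omega) (by omega) hq1 hqn (he.trans hqi.symm)
      omega
    omega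
  have hab : π s < b := by
    apply hleft (s - 1) (π s) (by omega) ?_ hsv
    · intro k y hk1 hk2 hky
      obtain ⟨hkn, rfl⟩ := permList_get' hky
      exact hmax (k + 1) (by omega) (by omega)
    · rw [permList_get n π (show s - 1 < n by omega), show s - 1 + 1 = s by omega]
  have hbi : b < i := by
    have h3 : b ≠ i := by
      intro he
      have h4 : π (j0 + 1) = π p := by rw [hpi, ← hj0v, he]
      have := hinj (j0 + 1) p (by omega) (by omega) hp1 hpn h4
      omega
    omega
  have hpss : p < s := by
    have hsni : π s ≠ i := by omega
    have hne : p ≠ s := by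
      intro he
      rw [← he, hpi] at hsni
      exact hsni rfl
    omega
  have hb2 := (hbax p s (j0 + 1) hp1 hpss (by omega) (by omega)).2
  apply hb2
  refine ⟨by omega, by rw [hpi]; omega, ?_⟩
  rw [hpi]
  rcases eq_or_ne (s + 1) q with he | he
  · rw [he, hqi]; omega
  · have := hmax (s + 1) (by omega) (by omega); omega

lemma claim7c (hqp : q < p) : RCcond (permList n π) i := by
  classical
  have hQq : 1 ≤ q ∧ i < π q := ⟨hq1, by rw [hqi]; omega⟩
  set s := Nat.findGreatest (fun t => 1 ≤ t ∧ i < π t) (p - 1) with hsdef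
  have hqs : q ≤ s := Nat.le_findGreatest (by omega) hQq
  have hsp : s ≤ p - 1 := Nat.findGreatest_le _
  obtain ⟨hs1, hsv⟩ : 1 ≤ s ∧ i < π s := Nat.findGreatest_spec (P := fun t => 1 ≤ t ∧ i < π t) (show q ≤ p - 1 by omega) hQq
  have hmax : ∀ k, s < k → k ≤ p - 1 → π k < i := by
    intro k hk1 hk2
    have hnq := Nat.findGreatest_is_greatest (hsdef ▸ hk1) hk2
    have h1 : ¬ (i < π k) := fun h2 => hnq ⟨by omega, h2⟩
    have h2 : π k ≠ i := by
      intro he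
      have := hinj k p (by omega) (by omega) hp1 hpn (he.trans hpi.symm)
      omega
    omega
  refine ⟨p - 1, s - 1, π s, by omega, ?_, ?_, hsv, ?_, ?_⟩
  · rw [permList_get n π (show s - 1 < n by omega), show s - 1 + 1 = s by omega]
  · rw [permList_get n π (show p - 1 < n by omega), show p - 1 + 1 = p by omega, hpi]
  · intro k y hk1 hk2 hky
    obtain ⟨hkn, rfl⟩ := permList_get' hky
    exact hmax (k + 1) (by omega) (by omega)
  · intro s0 b hs0 hsb hvb hnear
    obtain ⟨hs0n, rfl⟩ := permList_get' hsb
    by_contra hab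
    push_neg at hab
    have hne : π (s0 + 1) ≠ π s := by
      intro he
      have := hinj (s0 + 1) s (by omega) (by omega) (by omega) (by omega) he
      omega
    have hbq : π (s0 + 1) ≠ i + 1 := by
      intro he
      have := hinj (s0 + 1) q (by omega) (by omega) hq1 hqn (he.trans hqi.symm)
      omega
    have hb2 : i + 1 < π (s0 + 1) := by omega
    have hsnq : π s ≠ i + 1 := by omega
    have hqs' : q < s := by
      rcases eq_or_ne q s with he | he
      · exact absurd (by rw [← he, hqi]) hsnq.symm
      · omega
    have hb := (hbax q s (s0 + 1) hq1 hqs' (by omega) (by omega)).1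
    apply hb
    refine ⟨?_, by rw [hqi]; omega, by omega⟩
    rw [hqi]
    rcases eq_or_ne (s + 1) p with he | he
    · rw [he, hpi]; omega
    · have := hmax (s + 1) (by omega) (by omega); omega

lemma claim7d (hpq : p < q) : ¬ RCcond (permList n π) i := by
  rintro ⟨i0, j0, a, hji, hgj, hgi, halt, hmid, hright⟩
  obtain ⟨hi0n, hi0v⟩ := permList_get' hgi
  have hp' : i0 + 1 = p :=
    hinj (i0 + 1) p (by omega) (by omega) hp1 hpn (hi0v.symm.trans hpi.symm)
  obtain ⟨hj0n, hj0v⟩ := permList_get' hgj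
  have hsp : j0 + 1 < p := by omega
  classical
  have hPex : ∃ t, p < t ∧ t ≤ n ∧ i < π t := ⟨q, hpq, hqn, by rw [hqi]; omega⟩
  obtain ⟨hpr, hrn, hir⟩ := Nat.find_spec hPex
  set r := Nat.find hPex with hrdef
  have hrq : r ≤ q := Nat.find_min' hPex ⟨hpq, hqn, by rw [hqi]; omega⟩
  have hminf : ∀ k, p < k → k < r → π k < i := by
    intro k hk1 hk2
    have h1 : ¬ (i < π k) := fun h2 => Nat.find_min hPex hk2 ⟨hk1, by omega, h2⟩
    have h2 : π k ≠ i := by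
      intro he
      have := hinj k p (by omega) (by omega) hp1 hpn (he.trans hpi.symm)
      omega
    omega
  have har : a < π r := by
    apply hright (r - 1) (π r) (by omega) ?_ (by omega)
    · intro k y hk1 hk2 hky
      obtain ⟨hkn, rfl⟩ := permList_get' hky
      exact hminf (k + 1) (by omega) (by omega)
    · rw [permList_get n π (show r - 1 < n by omega), show r - 1 + 1 = r by omega]
  have hai : π (j0 + 1) ≠ i + 1 := by
    intro he
    have := hinj (j0 + 1) q (by omega) (by omega) hq1 hqn (he.trans hqi.symm)
    omega
  have ha2 : i + 1 < a := by omega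
  have hrne : π r ≠ i + 1 := by omega
  have hrq' : r < q := by
    rcases eq_or_ne r q with he | he
    · exact absurd (by rw [he, hqi]) hrne
    · omega
  have hb := (hbax (j0 + 1) (r - 1) q (by omega) (by omega) (by omega) hqn).2
  apply hb
  refine ⟨?_, by rw [hqi]; omega, ?_⟩
  · rw [hqi]
    rcases eq_or_ne (r - 1) p with he | he
    · rw [he, hpi]; omega
    · have := hminf (r - 1) (by omega) (by omega); omega
  · rw [show r - 1 + 1 = r by omega]; omega

end Claims

end StmtAux

/-- For a Baxter permutation π, the node labeled i+1 in MinC(π) is a left child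
of its parent iff the node labeled i in MaxC(π) is a right child of its parent. -/
theorem stmt10 (n : ℕ) (π : ℕ → ℕ) (tmin tmax : BTree) (i : ℕ)
    (hbax : IsBaxter n π) (hperm : IsPermOn n π)
    (hmin : IsMinC (permList n π) tmin)
    (hmax : IsMaxC (permList n π) tmax)
    (hi1 : 1 ≤ i) (hi2 : i ≤ n - 1) :
    (∃ p, leftChildRel tmin p (i + 1)) ↔ (∃ p, rightChildRel tmax p i) := by
  have hn2 : 2 ≤ n := by omega
  obtain ⟨p, hpmem, hpi⟩ := hperm.surjOn (show i ∈ Set.Icc 1 n from Set.mem_Icc.mpr ⟨hi1, by omega⟩)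
  obtain ⟨q, hqmem, hqi⟩ := hperm.surjOn (show i + 1 ∈ Set.Icc 1 n from Set.mem_Icc.mpr ⟨by omega, by omega⟩)
  obtain ⟨hp1, hpn⟩ := Set.mem_Icc.mp hpmem
  obtain ⟨hq1, hqn⟩ := Set.mem_Icc.mp hqmem
  have hinj : ∀ a b, 1 ≤ a → a ≤ n → 1 ≤ b → b ≤ n → π a = π b → a = b := by
    intro a b ha1 han hb1 hbn he
    exact hperm.injOn (Set.mem_Icc.mpr ⟨ha1, han⟩) (Set.mem_Icc.mpr ⟨hb1, hbn⟩) he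
  have hnd := StmtAux.permList_nodup n π hperm
  rw [StmtAux.minC_iff hmin (i + 1) hnd, StmtAux.maxC_iff hmax i hnd]
  constructor
  · intro hLC
    rcases Nat.lt_or_ge q p with h | h
    · exact StmtAux.claim7c hbax hinj hp1 hpn hq1 hqn hpi hqi h
    · have hpq : p < q := by
        rcases Nat.eq_or_lt_of_le h with he | he
        · exfalso; rw [← he, hpi] at hqi; omega
        · exact he
      exact absurd hLC (StmtAux.claim7b hbax hinj hp1 hpn hq1 hqn hpi hqi hpq)
  · intro hRC
    rcases Nat.lt_or_ge q p with h | h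
    · exact StmtAux.claim7a hbax hinj hp1 hpn hq1 hqn hpi hqi h
    · have hpq : p < q := by
        rcases Nat.eq_or_lt_of_le h with he | he
        · exfalso; rw [← he, hpi] at hqi; omega
        · exact he
      exact absurd hRC (StmtAux.claim7d hbax hinj hp1 hpn hq1 hqn hpi hqi hpq)
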